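/- Let E : [0,∞) → [0,∞) be a nonincreasing function satisfying ∫ₛ^∞ E(r) dr ≤ C·E(s) for all s ≥ 0, for some constant C > 0. Then E(t) ≤ E(0) · e · exp(−t/C) for all t ≥ 0 (Haraux–Lagnese inequality). -/

import Mathlib

open Set MeasureTheory

/-- Haraux–Lagnese inequality: if `E : [0,∞) → [0,∞)` is nonincreasing,
integrable, and `∫ₛ^∞ E(r) dr ≤ C·E(s)` for all `s ≥ 0`, then
`E(t) ≤ E(0) · e · exp(−t/C)` for all `t ≥ 0`. -/
theorem stmt2 (E : ℝ → ℝ) (C : ℝ) (hC : 0 < C)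
    (hmeas : Measurable E)
    (hnonneg : ∀ t, 0 ≤ t → 0 ≤ E t)
    (hmono : AntitoneOn E (Ici 0))
    (hint : IntegrableOn E (Ici 0))
    (hineq : ∀ s, 0 ≤ s → ∫ r in Ici s, E r ≤ C * E s) :
    ∀ t, 0 ≤ t → E t ≤ E 0 * Real.exp 1 * Real.exp (-t / C) := by
  set F : ℝ → ℝ := fun s => ∫ r in Ici s, E r with hF
  have hFnonneg : ∀ s, 0 ≤ s → 0 ≤ F s := by
    intro s hs
    apply setIntegral_nonneg measurableSet_Ici
    intro x hx
    exact hnonneg x (le_trans hs hx)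
  have hintt : ∀ s : ℝ, 0 ≤ s → IntegrableOn E (Ici s) := fun s hs =>
    hint.mono_set (Ici_subset_Ici.mpr hs)
  have hlow : ∀ s t : ℝ, 0 ≤ s → s ≤ t → (t - s) * E t ≤ ∫ r in Ico s t, E r := by
    intro s t hs hst
    have hIco : IntegrableOn E (Ico s t) :=
      hint.mono_set (fun x hx => le_trans hs hx.1)
    have h1 : ∫ _ in Ico s t, E t ≤ ∫ r in Ico s t, E r := by
      apply setIntegral_mono_on (integrableOn_const measure_Ico_lt_top.ne)
        hIco measurableSet_Ico
      intro x hx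
      exact hmono (le_trans hs hx.1) (le_trans hs (le_trans hx.1 hx.2.le)) hx.2.le
    calc (t - s) * E t = ∫ _ in Ico s t, E t := by
          rw [setIntegral_const, Real.volume_real_Ico_of_le hst, smul_eq_mul]
      _ ≤ _ := h1
  have hstep : ∀ s t : ℝ, 0 ≤ s → s ≤ t → F t * (1 + (t - s) / C) ≤ F s := by
    intro s t hs hst
    have ht : (0:ℝ) ≤ t := le_trans hs hst
    have hIco : IntegrableOn E (Ico s t) :=
      hint.mono_set (fun x hx => le_trans hs hx.1)
    have hdisj : Disjoint (Ico s t) (Ici t) :=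
      disjoint_left.mpr (fun x hx hx' => absurd hx.2 (not_lt.mpr hx'))
    have hsplit : F s = (∫ r in Ico s t, E r) + F t := by
      rw [hF]
      simp only
      rw [← setIntegral_union hdisj measurableSet_Ici hIco (hintt t ht),
        Ico_union_Ici_eq_Ici hst]
    have h1 : (t - s) * E t ≤ ∫ r in Ico s t, E r := hlow s t hs hst
    have h2 : F t ≤ C * E t := hineq t ht
    have h3 : F t * ((t - s) / C) ≤ (t - s) * E t := by
      rw [div_eq_mul_inv, ← mul_assoc, mul_comm (F t)]
      rw [mul_comm (t - s) (E t)]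
      have : (t - s) * F t ≤ (t - s) * (C * E t) :=
        mul_le_mul_of_nonneg_left h2 (by linarith)
      calc (t - s) * F t * C⁻¹ ≤ (t - s) * (C * E t) * C⁻¹ :=
            mul_le_mul_of_nonneg_right this (by positivity)
        _ = E t * (t - s) := by field_simp
    calc F t * (1 + (t - s) / C) = F t + F t * ((t - s) / C) := by ring
      _ ≤ F t + (t - s) * E t := by linarith
      _ ≤ F t + ∫ r in Ico s t, E r := by linarith
      _ = F s := by linarith [hsplit]
  -- iterate: for t ≥ 0, n ≥ 1, F t * (1 + (t/C)/n)^n ≤ F 0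
  have hiter : ∀ (t : ℝ), 0 ≤ t → ∀ n : ℕ, 0 < n →
      F t * (1 + (t / C) / n) ^ n ≤ F 0 := by
    intro t ht n hn
    have hδ : 0 ≤ t / n := by positivity
    have key : ∀ k : ℕ, k ≤ n → F (k * (t / n)) * (1 + (t / C) / n) ^ k ≤ F 0 := by
      intro k hk
      induction k with
      | zero => simp
      | succ m ih =>
        have hm : m ≤ n := le_trans (Nat.le_succ m) hk
        have hs0 : (0:ℝ) ≤ m * (t / n) := by positivity
        have hst : (m : ℝ) * (t / n) ≤ (m + 1) * (t / n) := by nlinarith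
        have hstep' := hstep (m * (t / n)) ((m + 1) * (t / n)) hs0 hst
        have heq : ((m:ℝ) + 1) * (t / n) - m * (t / n) = t / n := by ring
        rw [heq] at hstep'
        have hdiv : (t / n) / C = (t / C) / n := by ring
        rw [hdiv] at hstep'
        have hfac : (0:ℝ) ≤ (1 + (t / C) / n) ^ m := by positivity
        have := mul_le_mul_of_nonneg_right hstep' hfac
        calc F (((m:ℕ) + 1 : ℕ) * (t / n)) * (1 + (t / C) / n) ^ (m + 1)
            = F (((m:ℝ) + 1) * (t / n)) * (1 + (t / C) / n) * (1 + (t / C) / n) ^ m := by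
              push_cast; ring
          _ ≤ F ((m:ℝ) * (t / n)) * (1 + (t / C) / n) ^ m := this
          _ ≤ F 0 := ih hm
    have := key n le_rfl
    have heq : (n : ℝ) * (t / n) = t := by
      field_simp
    rwa [heq] at this
  -- pass to the limit: F t ≤ F 0 * exp (-t/C)
  have hFdecay : ∀ t : ℝ, 0 ≤ t → F t ≤ F 0 * Real.exp (-(t / C)) := by
    intro t ht
    have hlim : Filter.Tendsto (fun n : ℕ => F t * (1 + (t / C) / n) ^ n)
        Filter.atTop (nhds (F t * Real.exp (t / C))) :=
      (Real.tendsto_one_add_div_pow_exp (t / C)).const_mul (F t)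
    have hle : F t * Real.exp (t / C) ≤ F 0 := by
      apply le_of_tendsto hlim
      filter_upwards [Filter.eventually_gt_atTop 0] with n hn
      exact hiter t ht n hn
    have hexp : 0 < Real.exp (t / C) := Real.exp_pos _
    rw [Real.exp_neg]
    have heq2 : F t = (F t * Real.exp (t / C)) * (Real.exp (t / C))⁻¹ := by
      field_simp
    rw [heq2]
    exact mul_le_mul_of_nonneg_right hle (by positivity)
  -- conclude
  intro t ht
  rcases le_or_gt t C with htC1 | htC2
  · -- t ≤ C : E t ≤ E 0 ≤ E 0 * e * exp(-t/C)
    have h1 : E t ≤ E 0 := hmono (mem_Ici.mpr le_rfl) ht ht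
    have h2 : (1:ℝ) ≤ Real.exp 1 * Real.exp (-t / C) := by
      rw [← Real.exp_add]
      have h0 : t / C ≤ 1 := (div_le_one hC).mpr htC1
      have : 0 ≤ 1 + -t / C := by rw [neg_div]; linarith
      calc (1:ℝ) = Real.exp 0 := by simp
        _ ≤ Real.exp (1 + -t / C) := Real.exp_le_exp.mpr (by linarith)
    nlinarith [hnonneg 0 le_rfl, hnonneg t ht, Real.exp_pos (1:ℝ), Real.exp_pos (-t/C)]
  · -- t > C
    have hs0 : (0:ℝ) ≤ t - C := by linarith
    have h1 : C * E t ≤ ∫ r in Ico (t - C) t, E r := by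
      have := hlow (t - C) t hs0 (by linarith)
      simpa using this
    have h2 : (∫ r in Ico (t - C) t, E r) ≤ F (t - C) := by
      have hdisj : Disjoint (Ico (t - C) t) (Ici t) :=
        disjoint_left.mpr (fun x hx hx' => absurd hx.2 (not_lt.mpr hx'))
      have hIco : IntegrableOn E (Ico (t - C) t) :=
        hint.mono_set (fun x hx => le_trans hs0 hx.1)
      have hsplit : F (t - C) = (∫ r in Ico (t - C) t, E r) + F t := by
        rw [hF]
        simp only
        rw [← setIntegral_union hdisj measurableSet_Ici hIco (hintt t ht),
          Ico_union_Ici_eq_Ici (by linarith)]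
      linarith [hFnonneg t ht, hsplit]
    have h3 : F (t - C) ≤ F 0 * Real.exp (-((t - C) / C)) := hFdecay (t - C) hs0
    have h4 : F 0 ≤ C * E 0 := hineq 0 le_rfl
    have hexp0 : (0:ℝ) < Real.exp (-((t - C) / C)) := Real.exp_pos _
    have h5 : C * E t ≤ C * E 0 * Real.exp (-((t - C) / C)) := by
      calc C * E t ≤ F (t - C) := le_trans h1 h2
        _ ≤ F 0 * Real.exp (-((t - C) / C)) := h3
        _ ≤ C * E 0 * Real.exp (-((t - C) / C)) :=
            mul_le_mul_of_nonneg_right h4 hexp0.le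
    have heq : Real.exp (-((t - C) / C)) = Real.exp 1 * Real.exp (-t / C) := by
      rw [← Real.exp_add]
      congr 1
      field_simp
      ring
    rw [heq] at h5
    have := (mul_le_mul_iff_right₀ hC).mp (by linarith [h5] : C * E t ≤ C * (E 0 * Real.exp 1 * Real.exp (-t / C)))
    exact this
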